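/- (Appendix Lemma A.2, growth bound on Θ.) Assume in addition that the series ∑' n, Real.exp (−ε n) / m n converges, and let Θ ∈ L²_M satisfy Q Θ n p = −(p / m n) * M n p for every n and almost every p. Then for every n there exists a constant C ≥ 0 (one may take C = max (α₂ * ‖Θ‖_M, 1 / m n) / α₁) such that |Θ n p| ≤ C * (1 + |p|) * M n p for almost every p ∈ ℝ. -/

import Mathlib

open MeasureTheory Real

set_option maxHeartbeats 1000000 in
theorem stmt13
    (m ε : ℕ → ℝ)
    (hm : ∀ n, 0 < m n)
    (hε : Summable fun n => Real.exp (-ε n))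
    (Z : ℝ) (hZ : Z = ∑' n, Real.exp (-ε n))
    (M : ℕ → ℝ → ℝ)
    (hM : ∀ n p, M n p =
      Real.exp (-(p ^ 2 / (2 * m n) + ε n)) / (Real.sqrt (2 * Real.pi * m n) * Z))
    (hMnorm : (∑' n, ∫ p, M n p) = 1)
    (α : ℕ → ℕ → ℝ → ℝ → ℝ)
    (hαmeas : ∀ n n', Measurable fun q : ℝ × ℝ => α n n' q.1 q.2)
    (α₁ α₂ : ℝ) (hα₁ : 0 < α₁) (hα₁₂ : α₁ ≤ α₂)
    (hsym : ∀ n n' p p', α n n' p p' = α n' n p' p)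
    (hbd : ∀ n n' p p', α₁ ≤ α n n' p p' ∧ α n n' p p' ≤ α₂)
    (Q : (ℕ → ℝ → ℝ) → ℕ → ℝ → ℝ)
    (hQ : ∀ f n p, Q f n p =
      ∑' n', ∫ p', α n n' p p' * (M n p * f n' p' - M n' p' * f n p))
    (memL2M : (ℕ → ℝ → ℝ) → Prop)
    (hmem : ∀ f, memL2M f ↔ (∀ n, Measurable (f n)) ∧
      (∀ n, Integrable fun p => f n p ^ 2 / M n p) ∧
      (Summable fun n => ∫ p, f n p ^ 2 / M n p))
    (nrm : (ℕ → ℝ → ℝ) → ℝ)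
    (hnrm : ∀ f, nrm f = (∑' n, ∫ p, f n p ^ 2 / M n p) ^ ((1 : ℝ) / 2))
    (hεm : Summable fun n => Real.exp (-ε n) / m n)
    (Θ : ℕ → ℝ → ℝ) (hΘmem : memL2M Θ)
    (hΘeq : ∀ n, ∀ᵐ p ∂(volume : Measure ℝ), Q Θ n p = -(p / m n) * M n p) :
    ∀ n, ∃ C : ℝ, C = max (α₂ * nrm Θ) (1 / m n) / α₁ ∧ 0 ≤ C ∧
      ∀ᵐ p ∂(volume : Measure ℝ), |Θ n p| ≤ C * (1 + |p|) * M n p := by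
  obtain ⟨hΘmeas, hΘsqint, hΘsqsum⟩ := (hmem Θ).mp hΘmem
  have hZpos : 0 < Z := by
    rw [hZ]; exact Summable.tsum_pos hε (fun i => (Real.exp_pos _).le) 0 (Real.exp_pos _)
  have hMpos : ∀ k p, 0 < M k p := by
    intro k p; rw [hM]
    exact div_pos (Real.exp_pos _)
      (mul_pos (Real.sqrt_pos.2 (mul_pos (mul_pos two_pos Real.pi_pos) (hm k))) hZpos)
  have hMrw : ∀ k, M k = fun p => Real.exp (-(1 / (2 * m k)) * p ^ 2) *
      (Real.exp (-ε k) / (Real.sqrt (2 * Real.pi * m k) * Z)) := by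
    intro k; funext p
    have hmk := hm k
    rw [hM, show -(p ^ 2 / (2 * m k) + ε k) = (-(1 / (2 * m k)) * p ^ 2) + (-ε k) by
      field_simp; ring, Real.exp_add]
    ring
  have hMmeas : ∀ k, Measurable (M k) := by
    intro k; rw [hMrw]
    exact ((measurable_id.pow_const 2).const_mul _).exp.mul_const _
  have hMint : ∀ k, Integrable (M k) := by
    intro k; rw [hMrw]
    have hmk := hm k
    exact (integrable_exp_neg_mul_sq (by positivity)).mul_const _
  have hMintegral : ∀ k, ∫ p, M k p = Real.exp (-ε k) / Z := by
    intro k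
    have hmk := hm k
    have hsq : (0:ℝ) < Real.sqrt (2 * Real.pi * m k) :=
      Real.sqrt_pos.2 (by positivity)
    rw [hMrw]
    rw [MeasureTheory.integral_mul_const, integral_gaussian]
    rw [show Real.pi / (1 / (2 * m k)) = 2 * Real.pi * m k by field_simp]
    field_simp
  have hMsum : Summable fun k => ∫ p, M k p :=
    (hε.div_const Z).congr fun k => (hMintegral k).symm
  have hnrm_nonneg : 0 ≤ nrm Θ := by
    rw [hnrm]
    have h0 : (0:ℝ) ≤ ∑' k, ∫ p, Θ k p ^ 2 / M k p :=
      tsum_nonneg fun k => integral_nonneg fun p => div_nonneg (sq_nonneg _) (hMpos k p).le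
    positivity
  have hconj : Real.HolderConjugate 2 2 := Real.HolderConjugate.two_two
  have hss : ∀ x : ENNReal, (x ^ ((1:ℝ)/2)) ^ (2:ℝ) = x := by
    intro x; rw [← ENNReal.rpow_mul]; norm_num
  -- Cauchy-Schwarz on ℝ for each k
  have hCS : ∀ k, (∫⁻ p, ENNReal.ofReal |Θ k p|) ≤
      (∫⁻ p, ENNReal.ofReal (Θ k p ^ 2 / M k p)) ^ ((1:ℝ)/2) *
      (∫⁻ p, ENNReal.ofReal (M k p)) ^ ((1:ℝ)/2) := by
    intro k
    set f : ℝ → ENNReal := fun p => ENNReal.ofReal (Θ k p ^ 2 / M k p) ^ ((1:ℝ)/2) with hf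
    set g : ℝ → ENNReal := fun p => ENNReal.ofReal (M k p) ^ ((1:ℝ)/2) with hg
    have hfm : Measurable f :=
      ENNReal.continuous_rpow_const.measurable.comp
        (((hΘmeas k).pow_const 2 |>.div (hMmeas k)).ennreal_ofReal)
    have hgm : Measurable g :=
      ENNReal.continuous_rpow_const.measurable.comp ((hMmeas k).ennreal_ofReal)
    have hpt : ∀ p, ENNReal.ofReal |Θ k p| = (f * g) p := by
      intro p
      have hMp := hMpos k p
      simp only [Pi.mul_apply, hf, hg]
      rw [ENNReal.ofReal_rpow_of_nonneg (by positivity) (by norm_num),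
          ENNReal.ofReal_rpow_of_nonneg hMp.le (by norm_num),
          ← ENNReal.ofReal_mul (by positivity)]
      congr 1
      rw [← Real.sqrt_eq_rpow, ← Real.sqrt_eq_rpow,
          ← Real.sqrt_mul (div_nonneg (sq_nonneg _) hMp.le),
          div_mul_cancel₀ _ hMp.ne', Real.sqrt_sq_eq_abs]
    calc (∫⁻ p, ENNReal.ofReal |Θ k p|) = ∫⁻ p, (f * g) p := lintegral_congr hpt
      _ ≤ (∫⁻ p, f p ^ (2:ℝ)) ^ (1/(2:ℝ)) * (∫⁻ p, g p ^ (2:ℝ)) ^ (1/(2:ℝ)) :=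
          ENNReal.lintegral_mul_le_Lp_mul_Lq volume hconj hfm.aemeasurable hgm.aemeasurable
      _ = (∫⁻ p, ENNReal.ofReal (Θ k p ^ 2 / M k p)) ^ ((1:ℝ)/2) *
          (∫⁻ p, ENNReal.ofReal (M k p)) ^ ((1:ℝ)/2) := by
          simp only [hf, hg, hss]
  -- Cauchy-Schwarz on ℕ
  have hCS2 : (∑' k, ((∫⁻ p, ENNReal.ofReal (Θ k p ^ 2 / M k p)) ^ ((1:ℝ)/2) *
        (∫⁻ p, ENNReal.ofReal (M k p)) ^ ((1:ℝ)/2))) ≤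
      (∑' k, ∫⁻ p, ENNReal.ofReal (Θ k p ^ 2 / M k p)) ^ ((1:ℝ)/2) *
      (∑' k, ∫⁻ p, ENNReal.ofReal (M k p)) ^ ((1:ℝ)/2) := by
    set F : ℕ → ENNReal := fun k => (∫⁻ p, ENNReal.ofReal (Θ k p ^ 2 / M k p)) ^ ((1:ℝ)/2)
    set G : ℕ → ENNReal := fun k => (∫⁻ p, ENNReal.ofReal (M k p)) ^ ((1:ℝ)/2)
    have key := ENNReal.lintegral_mul_le_Lp_mul_Lq (Measure.count : Measure ℕ) hconj
      (measurable_from_nat (f := F)).aemeasurable (measurable_from_nat (f := G)).aemeasurable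
    simp only [lintegral_count, Pi.mul_apply] at key
    calc ∑' k, F k * G k ≤ (∑' k, F k ^ (2:ℝ)) ^ (1/(2:ℝ)) * (∑' k, G k ^ (2:ℝ)) ^ (1/(2:ℝ)) := key
      _ = _ := by simp only [F, G, hss]
  -- compute the two sums
  have hv1 : (∑' k, ∫⁻ p, ENNReal.ofReal (M k p)) = 1 := by
    have h1 : ∀ k, (∫⁻ p, ENNReal.ofReal (M k p)) = ENNReal.ofReal (∫ p, M k p) :=
      fun k => (ofReal_integral_eq_lintegral_ofReal (hMint k) (ae_of_all _ fun p => (hMpos k p).le)).symm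
    rw [tsum_congr h1,
      ← ENNReal.ofReal_tsum_of_nonneg (fun k => integral_nonneg fun p => (hMpos k p).le) hMsum,
      hMnorm, ENNReal.ofReal_one]
  have hu1 : (∑' k, ∫⁻ p, ENNReal.ofReal (Θ k p ^ 2 / M k p)) =
      ENNReal.ofReal (∑' k, ∫ p, Θ k p ^ 2 / M k p) := by
    have h1 : ∀ k, (∫⁻ p, ENNReal.ofReal (Θ k p ^ 2 / M k p)) =
        ENNReal.ofReal (∫ p, Θ k p ^ 2 / M k p) := fun k =>
      (ofReal_integral_eq_lintegral_ofReal (hΘsqint k)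
        (ae_of_all _ fun p => div_nonneg (sq_nonneg _) (hMpos k p).le)).symm
    rw [tsum_congr h1, ← ENNReal.ofReal_tsum_of_nonneg
      (fun k => integral_nonneg fun p => div_nonneg (sq_nonneg _) (hMpos k p).le) hΘsqsum]
  have hAsum : (∑' k, ∫⁻ p, ENNReal.ofReal |Θ k p|) ≤ ENNReal.ofReal (nrm Θ) := by
    calc (∑' k, ∫⁻ p, ENNReal.ofReal |Θ k p|)
        ≤ ∑' k, ((∫⁻ p, ENNReal.ofReal (Θ k p ^ 2 / M k p)) ^ ((1:ℝ)/2) *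
            (∫⁻ p, ENNReal.ofReal (M k p)) ^ ((1:ℝ)/2)) := ENNReal.tsum_le_tsum hCS
      _ ≤ (∑' k, ∫⁻ p, ENNReal.ofReal (Θ k p ^ 2 / M k p)) ^ ((1:ℝ)/2) *
          (∑' k, ∫⁻ p, ENNReal.ofReal (M k p)) ^ ((1:ℝ)/2) := hCS2
      _ = ENNReal.ofReal (nrm Θ) := by
          rw [hu1, hv1, ENNReal.one_rpow, mul_one,
            ENNReal.ofReal_rpow_of_nonneg
              (tsum_nonneg fun k => integral_nonneg fun p =>
                div_nonneg (sq_nonneg _) (hMpos k p).le) (by norm_num), hnrm]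
  have hAlt : ∀ k, (∫⁻ p, ENNReal.ofReal |Θ k p|) < ⊤ := fun k =>
    lt_of_le_of_lt (le_trans (ENNReal.le_tsum k) hAsum) ENNReal.ofReal_lt_top
  have hΘint : ∀ k, Integrable (Θ k) := by
    intro k
    refine ⟨(hΘmeas k).aestronglyMeasurable, ?_⟩
    rw [hasFiniteIntegral_iff_norm]
    simpa [Real.norm_eq_abs] using hAlt k
  have ha_eq : ∀ k, ∫ p, |Θ k p| = (∫⁻ p, ENNReal.ofReal |Θ k p|).toReal := fun k =>
    integral_eq_lintegral_of_nonneg_ae (ae_of_all _ fun p => abs_nonneg _)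
      ((hΘmeas k).abs.aestronglyMeasurable)
  have hasummable : Summable fun k => ∫ p, |Θ k p| :=
    (ENNReal.summable_toReal (lt_of_le_of_lt hAsum ENNReal.ofReal_lt_top).ne).congr
      fun k => (ha_eq k).symm
  have hatsum : (∑' k, ∫ p, |Θ k p|) ≤ nrm Θ := by
    rw [tsum_congr ha_eq, ← ENNReal.tsum_toReal_eq fun k => (hAlt k).ne]
    exact ENNReal.toReal_le_of_le_ofReal hnrm_nonneg hAsum
  -- main part
  intro n
  refine ⟨_, rfl, div_nonneg (le_trans (one_div_nonneg.mpr (hm n).le)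
    (le_max_right (α₂ * nrm Θ) (1 / m n))) hα₁.le, ?_⟩
  have hαm : ∀ k (p : ℝ), Measurable fun p' => α n k p p' := fun k p =>
    (hαmeas n k).comp (measurable_prodMk_left)
  have hαnn : ∀ k (p p' : ℝ), 0 ≤ α n k p p' := fun k p p' =>
    le_trans hα₁.le (hbd n k p p').1
  have hintαΘ : ∀ k (p : ℝ), Integrable fun p' => α n k p p' * Θ k p' := by
    intro k p
    refine Integrable.mono' ((hΘint k).abs.const_mul α₂)
      ((hαm k p).mul (hΘmeas k)).aestronglyMeasurable (ae_of_all _ fun p' => ?_)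
    rw [Real.norm_eq_abs, abs_mul]
    exact mul_le_mul_of_nonneg_right
      (by rw [abs_of_nonneg (hαnn k p p')]; exact (hbd n k p p').2) (abs_nonneg _)
  have hintαM : ∀ k (p : ℝ), Integrable fun p' => α n k p p' * M k p' := by
    intro k p
    refine Integrable.mono' ((hMint k).const_mul α₂)
      ((hαm k p).mul (hMmeas k)).aestronglyMeasurable (ae_of_all _ fun p' => ?_)
    rw [Real.norm_eq_abs, abs_mul, abs_of_nonneg (hMpos k p').le]
    exact mul_le_mul_of_nonneg_right
      (by rw [abs_of_nonneg (hαnn k p p')]; exact (hbd n k p p').2) (hMpos k p').le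
  have hI1bd : ∀ k (p : ℝ), |∫ p', α n k p p' * Θ k p'| ≤ α₂ * ∫ p', |Θ k p'| := by
    intro k p
    calc |∫ p', α n k p p' * Θ k p'| ≤ ∫ p', |α n k p p' * Θ k p'| := by
          simpa only [Real.norm_eq_abs] using norm_integral_le_integral_norm
            (μ := volume) (fun p' => α n k p p' * Θ k p')
      _ ≤ ∫ p', α₂ * |Θ k p'| := by
          refine integral_mono (hintαΘ k p).abs ((hΘint k).abs.const_mul α₂) fun p' => ?_
          rw [abs_mul]
          exact mul_le_mul_of_nonneg_right
            (by rw [abs_of_nonneg (hαnn k p p')]; exact (hbd n k p p').2) (abs_nonneg _)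
      _ = α₂ * ∫ p', |Θ k p'| := integral_const_mul _ _
  have hI2lb : ∀ k (p : ℝ), α₁ * ∫ p', M k p' ≤ ∫ p', α n k p p' * M k p' := by
    intro k p
    rw [← integral_const_mul]
    exact integral_mono ((hMint k).const_mul α₁) (hintαM k p) fun p' =>
      mul_le_mul_of_nonneg_right (hbd n k p p').1 (hMpos k p').le
  have hI2ub : ∀ k (p : ℝ), (∫ p', α n k p p' * M k p') ≤ α₂ * ∫ p', M k p' := by
    intro k p
    rw [← integral_const_mul]
    exact integral_mono (hintαM k p) ((hMint k).const_mul α₂) fun p' =>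
      mul_le_mul_of_nonneg_right (hbd n k p p').2 (hMpos k p').le
  have hI2nn : ∀ k (p : ℝ), 0 ≤ ∫ p', α n k p p' * M k p' := fun k p =>
    integral_nonneg fun p' => mul_nonneg (hαnn k p p') (hMpos k p').le
  have hsumI1 : ∀ p : ℝ, Summable fun k => ∫ p', α n k p p' * Θ k p' := by
    intro p
    exact Summable.of_norm_bounded (hasummable.mul_left α₂) fun k => by
      rw [Real.norm_eq_abs]; exact hI1bd k p
  have hsumI2 : ∀ p : ℝ, Summable fun k => ∫ p', α n k p p' * M k p' := by
    intro p
    exact Summable.of_norm_bounded (hMsum.mul_left α₂) fun k => by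
      rw [Real.norm_eq_abs, abs_of_nonneg (hI2nn k p)]; exact hI2ub k p
  have hnu : ∀ p : ℝ, α₁ ≤ ∑' k, ∫ p', α n k p p' * M k p' := by
    intro p
    calc α₁ = α₁ * ∑' k, ∫ p', M k p' := by rw [hMnorm, mul_one]
      _ = ∑' k, α₁ * ∫ p', M k p' := tsum_mul_left.symm
      _ ≤ ∑' k, ∫ p', α n k p p' * M k p' :=
          Summable.tsum_le_tsum (fun k => hI2lb k p) (hMsum.mul_left α₁) (hsumI2 p)
  have hS : ∀ p : ℝ, |∑' k, ∫ p', α n k p p' * Θ k p'| ≤ α₂ * nrm Θ := by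
    intro p
    have habs : Summable fun k => |∫ p', α n k p p' * Θ k p'| :=
      Summable.of_nonneg_of_le (fun k => abs_nonneg _) (fun k => hI1bd k p)
        (hasummable.mul_left α₂)
    calc |∑' k, ∫ p', α n k p p' * Θ k p'| ≤ ∑' k, |∫ p', α n k p p' * Θ k p'| := by
          have h := norm_tsum_le_tsum_norm (f := fun k => ∫ p', α n k p p' * Θ k p')
            (by simpa only [Real.norm_eq_abs] using habs)
          simpa only [Real.norm_eq_abs] using h
      _ ≤ ∑' k, α₂ * ∫ p', |Θ k p'| :=
          Summable.tsum_le_tsum (fun k => hI1bd k p) habs (hasummable.mul_left α₂)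
      _ = α₂ * ∑' k, ∫ p', |Θ k p'| := tsum_mul_left
      _ ≤ α₂ * nrm Θ := mul_le_mul_of_nonneg_left hatsum (le_trans hα₁.le hα₁₂)
  have hQsplit : ∀ p : ℝ, Q Θ n p =
      M n p * (∑' k, ∫ p', α n k p p' * Θ k p') -
      Θ n p * (∑' k, ∫ p', α n k p p' * M k p') := by
    intro p
    rw [hQ]
    have h1 : ∀ k, (∫ p', α n k p p' * (M n p * Θ k p' - M k p' * Θ n p)) =
        M n p * (∫ p', α n k p p' * Θ k p') - Θ n p * (∫ p', α n k p p' * M k p') := by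
      intro k
      rw [show (fun p' => α n k p p' * (M n p * Θ k p' - M k p' * Θ n p)) =
          fun p' => M n p * (α n k p p' * Θ k p') - Θ n p * (α n k p p' * M k p') from
        funext fun p' => by ring]
      rw [integral_sub ((hintαΘ k p).const_mul _) ((hintαM k p).const_mul _),
        integral_const_mul, integral_const_mul]
    rw [tsum_congr h1, Summable.tsum_sub ((hsumI1 p).mul_left _) ((hsumI2 p).mul_left _),
      tsum_mul_left, tsum_mul_left]
  filter_upwards [hΘeq n] with p hp
  set S := ∑' k, ∫ p', α n k p p' * Θ k p' with hSdef
  set ν := ∑' k, ∫ p', α n k p p' * M k p' with hνdef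
  set K := max (α₂ * nrm Θ) (1 / m n) with hKdef
  have hkey : Θ n p * ν = M n p * S + (p / m n) * M n p := by
    have h := (hQsplit p).symm.trans hp
    linarith
  have hM0 := (hMpos n p).le
  have hK1 : α₂ * nrm Θ ≤ K := le_max_left _ _
  have hK2 : 1 / m n ≤ K := le_max_right _ _
  have hν0 : (0:ℝ) ≤ ν := le_trans hα₁.le (hnu p)
  have hchain : α₁ * |Θ n p| ≤ K * (1 + |p|) * M n p := by
    have h1 : α₁ * |Θ n p| ≤ ν * |Θ n p| :=
      mul_le_mul_of_nonneg_right (hnu p) (abs_nonneg _)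
    have h2 : ν * |Θ n p| = |Θ n p * ν| := by
      rw [abs_mul, abs_of_nonneg hν0]; ring
    have h3 : |Θ n p * ν| ≤ |M n p * S| + |(p / m n) * M n p| := by
      rw [hkey]; exact abs_add_le _ _
    have e1 : |M n p * S| = M n p * |S| := by rw [abs_mul, abs_of_nonneg hM0]
    have e2 : |(p / m n) * M n p| = |p| * (1 / m n) * M n p := by
      rw [abs_mul, abs_of_nonneg hM0, abs_div, abs_of_pos (hm n)]; ring
    have h4 : M n p * |S| ≤ M n p * (α₂ * nrm Θ) :=
      mul_le_mul_of_nonneg_left (hS p) hM0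
    have h5 : M n p * (α₂ * nrm Θ) ≤ M n p * K := mul_le_mul_of_nonneg_left hK1 hM0
    have h6 : |p| * (1 / m n) * M n p ≤ |p| * K * M n p :=
      mul_le_mul_of_nonneg_right (mul_le_mul_of_nonneg_left hK2 (abs_nonneg _)) hM0
    nlinarith [abs_nonneg p, hM0]
  have hgoal : K / α₁ * (1 + |p|) * M n p = K * (1 + |p|) * M n p / α₁ := by ring
  rw [hgoal, le_div_iff₀ hα₁]
  linarith
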